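/- Let K be a linearly ordered field, exp : K → K^{>0} an order-preserving isomorphism from (K,+) to (K^{>0},·) such that exp(1/k) ≤ 1 + 1/k for all k in a cofinal set of positive elements of a subring M ⊆ K. Then exp is continuous (in the ε-δ sense with ε, δ from K), and its inverse log is continuous. -/

import Mathlib

/-- Let `K` be a linearly ordered field, `M ⊆ K` a discretely ordered subring
whose positive elements are cofinal in `K`, and `exp` an order-preserving
isomorphism `(K,+) → (K^{>0},·)` with `exp (1/k) ≤ 1 + 1/k` for all positive
`k ∈ M`. Then `exp` is continuous and its inverse `log` is continuous on
`K^{>0}` (in the ε-δ sense internal to `K`). -/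
theorem stmt18 {K : Type*} [Field K] [LinearOrder K] [IsStrictOrderedRing K] (M : Subring K)
    (hdisc : ∀ m ∈ M, 0 < m → (1 : K) ≤ m)
    (hcofinal : ∀ x : K, ∃ k ∈ M, 0 < k ∧ x < k)
    (exp log : K → K)
    (hpos : ∀ x, 0 < exp x) (hmono : StrictMono exp)
    (hadd : ∀ x y, exp (x + y) = exp x * exp y)
    (hlog₁ : ∀ x, log (exp x) = x) (hlog₂ : ∀ y : K, 0 < y → exp (log y) = y)
    (hk : ∀ k ∈ M, 0 < k → exp (1 / k) ≤ 1 + 1 / k) :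
    (∀ x₀ : K, ∀ ε : K, 0 < ε → ∃ δ : K, 0 < δ ∧ ∀ x : K,
      |x - x₀| < δ → |exp x - exp x₀| < ε) ∧
    (∀ y₀ : K, 0 < y₀ → ∀ ε : K, 0 < ε → ∃ δ : K, 0 < δ ∧ ∀ y : K, 0 < y →
      |y - y₀| < δ → |log y - log y₀| < ε) := by
  have exp0 : exp 0 = 1 := by
    have h := hadd 0 0
    rw [zero_add] at h
    have h' : exp 0 * exp 0 = exp 0 * 1 := by rw [mul_one]; exact h.symm
    exact mul_left_cancel₀ (ne_of_gt (hpos 0)) h'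
  have expneg : ∀ x : K, exp (-x) = (exp x)⁻¹ := by
    intro x
    have h := hadd x (-x)
    rw [add_neg_cancel, exp0] at h
    have hx := (hpos x).ne'
    field_simp
    linarith [h]
  constructor
  · intro x₀ ε hε
    obtain ⟨k, hkM, hk0, hklt⟩ := hcofinal (exp x₀ / ε)
    have hk1 : (1 : K) ≤ k := hdisc k hkM hk0
    have hik : (0 : K) < 1 / k := by positivity
    have hik1 : 1 / k ≤ 1 := by
      rw [div_le_one hk0]; exact hk1
    have hke : exp (1 / k) ≤ 1 + 1 / k := hk k hkM hk0
    refine ⟨1 / k, hik, fun x hx => ?_⟩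
    set t := x - x₀ with ht
    have hupper : exp t ≤ 1 + 1 / k :=
      le_of_lt (lt_of_lt_of_le (hmono (abs_lt.mp hx).2) hke)
    have hlower : 1 - 1 / k ≤ exp t := by
      have h2 : (exp (1 / k))⁻¹ < exp t := by
        rw [← expneg]; exact hmono (abs_lt.mp hx).1
      have hep := hpos (1 / k)
      have hinv : (exp (1 / k))⁻¹ * exp (1 / k) = 1 :=
        inv_mul_cancel₀ hep.ne'
      nlinarith [mul_le_mul_of_nonneg_left hke (le_of_lt (inv_pos.mpr hep))]
    have hxeq : exp x = exp x₀ * exp t := by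
      rw [← hadd]; congr 1; ring
    have habs : |exp t - 1| ≤ 1 / k := by
      rw [abs_le]; constructor <;> linarith
    have hxp := hpos x₀
    have key : exp x₀ * (1 / k) < ε := by
      rw [div_lt_iff₀ hε] at hklt
      rw [mul_one_div, div_lt_iff₀ hk0]
      linarith
    calc |exp x - exp x₀| = exp x₀ * |exp t - 1| := by
          rw [hxeq, show exp x₀ * exp t - exp x₀ = exp x₀ * (exp t - 1) from by ring,
            abs_mul, abs_of_pos hxp]
      _ ≤ exp x₀ * (1 / k) := by
          exact mul_le_mul_of_nonneg_left habs hxp.le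
      _ < ε := key
  · intro y₀ hy₀ ε hε
    have ha : 0 < exp ε - 1 := by
      have := hmono hε; rw [exp0] at this; linarith
    have hb : 0 < 1 - exp (-ε) := by
      have := hmono (neg_lt_zero.mpr hε); rw [exp0] at this; linarith
    refine ⟨y₀ * min (exp ε - 1) (1 - exp (-ε)), by positivity, fun y hy hyd => ?_⟩
    have hdiff : exp (log y - log y₀) = y / y₀ := by
      rw [sub_eq_add_neg, hadd, expneg, hlog₂ y hy, hlog₂ y₀ hy₀, div_eq_mul_inv]
    have h1 : y - y₀ < y₀ * (exp ε - 1) :=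
      lt_of_lt_of_le (lt_of_abs_lt hyd)
        (mul_le_mul_of_nonneg_left (min_le_left _ _) hy₀.le)
    have h2 : y₀ - y < y₀ * (1 - exp (-ε)) :=
      lt_of_lt_of_le (lt_of_abs_lt (abs_sub_comm y y₀ ▸ hyd))
        (mul_le_mul_of_nonneg_left (min_le_right _ _) hy₀.le)
    rw [abs_lt]
    constructor
    · rw [← hmono.lt_iff_lt, hdiff, lt_div_iff₀ hy₀]
      nlinarith
    · rw [← hmono.lt_iff_lt, hdiff, div_lt_iff₀ hy₀]
      nlinarith
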